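/- Let A be a symmetric unimodular (m-1)×(m-1) integer matrix, let a₁,…,a_{m-1}, k_m be integers, and let ε ∈ {1,-1}. Then the (m+1)×(m+1) integer matrix whose upper-left block is A, whose last two columns restricted to the first m-1 rows are both equal to the column (a₁,…,a_{m-1}), whose last two rows restricted to the first m-1 columns are both equal to (a₁,…,a_{m-1}), and whose lower-right 2×2 block is [[k_m+ε, k_m],[k_m, k_m-ε]], is unimodular. -/
import Mathlib


theorem blink_linking_matrix_unimodular (n : ℕ) (A : Matrix (Fin n) (Fin n) ℤ)
    (hA : A.IsSymm) (hdetA : A.det = 1 ∨ A.det = -1)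
    (a : Fin n → ℤ) (k ε : ℤ) (hε : ε = 1 ∨ ε = -1) :
    (Matrix.fromBlocks A
        (Matrix.of fun i (_ : Fin 2) => a i)
        (Matrix.of fun (_ : Fin 2) j => a j)
        !![k + ε, k; k, k - ε]).det = 1 ∨
    (Matrix.fromBlocks A
        (Matrix.of fun i (_ : Fin 2) => a i)
        (Matrix.of fun (_ : Fin 2) j => a j)
        !![k + ε, k; k, k - ε]).det = -1 := by
  have hu : IsUnit A.det := by
    rcases hdetA with h | h <;> rw [h]
    · exact isUnit_one
    · exact isUnit_one.neg
  have : Invertible A := A.invertibleOfIsUnitDet hu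
  rw [Matrix.det_fromBlocks₁₁]
  set B : Matrix (Fin n) (Fin 2) ℤ := Matrix.of fun i (_ : Fin 2) => a i
  set C : Matrix (Fin 2) (Fin n) ℤ := Matrix.of fun (_ : Fin 2) j => a j
  set c : ℤ := ∑ t, (∑ s, a s * (⅟A) s t) * a t with hc
  have hS : ∀ i j : Fin 2, (C * ⅟A * B) i j = c := by
    intro i j
    simp [Matrix.mul_apply, B, C, hc]
  have hdet2 : (!![k + ε, k; k, k - ε] - C * ⅟A * B).det = -1 := by
    rw [Matrix.det_fin_two]
    simp only [Matrix.sub_apply, hS]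
    have hε2 : ε * ε = 1 := by rcases hε with h | h <;> simp [h]
    simp [Matrix.cons_val_zero, Matrix.cons_val_one]
    ring_nf
    linarith [hε2]
  rw [hdet2]
  rcases hdetA with h | h <;> simp [h]
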